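/- Let β > 0 and c ∈ ℝ with (β/2)c² > 1. Then the equation m = tanh((β/2)·m·c²) has exactly three solutions in (-1,1): m = 0, m = m* and m = -m* for some m* ∈ (0,1). -/

import Mathlib

open Set

private lemma tanh_hasDerivAt (x : ℝ) :
    HasDerivAt Real.tanh (1 / Real.cosh x ^ 2) x := by
  have h := (Real.hasDerivAt_sinh x).div (Real.hasDerivAt_cosh x)
      (ne_of_gt (Real.cosh_pos x))
  have heq : (Real.cosh x * Real.cosh x - Real.sinh x * Real.sinh x) /
      Real.cosh x ^ 2 = 1 / Real.cosh x ^ 2 := by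
    have := Real.cosh_sq_sub_sinh_sq x
    rw [show Real.cosh x * Real.cosh x - Real.sinh x * Real.sinh x
        = Real.cosh x ^ 2 - Real.sinh x ^ 2 by ring, this]
  rw [heq] at h
  have : Real.tanh = fun x => Real.sinh x / Real.cosh x := by
    funext y; exact Real.tanh_eq_sinh_div_cosh y
  rw [this]
  exact h

private lemma tanh_lt_one' (x : ℝ) : Real.tanh x < 1 := by
  rw [Real.tanh_eq_sinh_div_cosh, div_lt_one (Real.cosh_pos x)]
  nlinarith [Real.cosh_sub_sinh x, Real.exp_pos (-x)]

private lemma neg_one_lt_tanh' (x : ℝ) : -1 < Real.tanh x := by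
  rw [Real.tanh_eq_sinh_div_cosh, lt_div_iff₀ (Real.cosh_pos x)]
  nlinarith [Real.sinh_add_cosh x, Real.exp_pos x]

private lemma tanh_continuous : Continuous Real.tanh :=
  Differentiable.continuous (fun x => (tanh_hasDerivAt x).differentiableAt)

private lemma tanh_strictConcaveOn : StrictConcaveOn ℝ (Ici (0:ℝ)) Real.tanh := by
  apply StrictAntiOn.strictConcaveOn_of_deriv (convex_Ici 0)
    tanh_continuous.continuousOn
  have hderiv : deriv Real.tanh = fun x => 1 / Real.cosh x ^ 2 := by
    funext x; exact (tanh_hasDerivAt x).deriv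
  rw [hderiv, interior_Ici]
  intro x hx y hy hxy
  have hcosh : Real.cosh x < Real.cosh y := by
    rw [Real.cosh_lt_cosh, abs_of_pos hx, abs_of_pos hy]; exact hxy
  have h1 : (0:ℝ) < Real.cosh x := Real.cosh_pos x
  have h2 : Real.cosh x ^ 2 < Real.cosh y ^ 2 := by nlinarith
  exact one_div_lt_one_div_of_lt (by positivity) h2

/-- Key concavity consequence: if `tanh (a*m2) = m2` and `0 < m1 < m2`,
then `m1 < tanh (a*m1)`. -/
private lemma tanh_above (a m1 m2 : ℝ) (ha : 0 < a) (h1 : 0 < m1) (h12 : m1 < m2)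
    (hfix : Real.tanh (a * m2) = m2) : m1 < Real.tanh (a * m1) := by
  have h2 : 0 < m2 := h1.trans h12
  have hx0 : (0:ℝ) ∈ Ici (0:ℝ) := mem_Ici.mpr le_rfl
  have hy : a * m2 ∈ Ici (0:ℝ) := mem_Ici.mpr (le_of_lt (by positivity))
  have hne : (0:ℝ) ≠ a * m2 := ne_of_lt (by positivity)
  set t : ℝ := 1 - m1 / m2 with ht
  set s : ℝ := m1 / m2 with hs
  have hspos : 0 < s := div_pos h1 h2
  have htpos : 0 < t := by
    have : m1 / m2 < 1 := (div_lt_one h2).mpr h12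
    simp only [ht]; linarith
  have hts : t + s = 1 := by simp [ht, hs]
  have hcc := tanh_strictConcaveOn.2 hx0 hy hne htpos hspos hts
  have harg : t • (0:ℝ) + s • (a * m2) = a * m1 := by
    simp only [smul_eq_mul, hs, mul_zero, zero_add]
    field_simp
  rw [harg] at hcc
  have hrhs : t • Real.tanh 0 + s • Real.tanh (a * m2) = m1 := by
    rw [hfix, Real.tanh_zero]
    simp only [smul_eq_mul, mul_zero, zero_add, hs]
    field_simp
  rw [hrhs] at hcc
  exact hcc

/-- Supercritical case: if `β > 0` and `(β/2) c² > 1`, the self-consistency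
equation `m = tanh((β/2) m c²)` has exactly three solutions in `(-1,1)`:
`m = 0`, `m = m*` and `m = -m*` for some `m* ∈ (0,1)`. -/
theorem supercritical_three_solutions (β c : ℝ) (hβ : 0 < β)
    (hsup : 1 < β / 2 * c ^ 2) :
    ∃ mstar ∈ Ioo (0 : ℝ) 1,
      {m : ℝ | m ∈ Ioo (-1 : ℝ) 1 ∧ m = Real.tanh (β / 2 * m * c ^ 2)}
        = {-mstar, 0, mstar} := by
  set a : ℝ := β / 2 * c ^ 2 with ha_def
  have ha : 1 < a := hsup
  have ha0 : 0 < a := by linarith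
  have hkey : ∀ m : ℝ, β / 2 * m * c ^ 2 = a * m := by intro m; rw [ha_def]; ring
  set g : ℝ → ℝ := fun x => Real.tanh (a * x) - x with hg
  have hgderiv : ∀ x : ℝ, HasDerivAt g (a * (1 / Real.cosh (a * x) ^ 2) - 1) x := by
    intro x
    have hin : HasDerivAt (fun y : ℝ => a * y) a x := by
      simpa using (hasDerivAt_id x).const_mul a
    have h1 : HasDerivAt (fun y : ℝ => Real.tanh (a * y))
        (1 / Real.cosh (a * x) ^ 2 * a) x :=
      HasDerivAt.comp x (tanh_hasDerivAt (a * x)) hin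
    have h2 := h1.sub (hasDerivAt_id x)
    rw [hg]
    convert h2 using 1
    all_goals first | rfl | ring
  have hgcont : Continuous g :=
    (tanh_continuous.comp (continuous_const.mul continuous_id)).sub continuous_id
  -- near zero, g is positive (derivative at 0 is a - 1 > 0)
  have hslope : Filter.Tendsto (slope g 0) (nhdsWithin 0 {0}ᶜ) (nhds (a - 1)) := by
    have := hasDerivAt_iff_tendsto_slope.mp (hgderiv 0)
    have hlim : a * (1 / Real.cosh (a * 0) ^ 2) - 1 = a - 1 := by
      simp [Real.cosh_zero]
    rwa [hlim] at this
  have hev : ∀ᶠ x in nhdsWithin (0:ℝ) {0}ᶜ, 0 < slope g 0 x :=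
    hslope.eventually (eventually_gt_nhds (by linarith))
  have hev2 : ∀ᶠ x in nhdsWithin (0:ℝ) {0}ᶜ, |x| < 1 := by
    apply eventually_nhdsWithin_of_eventually_nhds
    have habs : Filter.Tendsto (fun x : ℝ => |x|) (nhds 0) (nhds 0) := by
      simpa using continuous_abs.tendsto (0:ℝ)
    exact habs.eventually (eventually_lt_nhds (by norm_num : (0:ℝ) < 1))
  have hmem' : ∀ᶠ x in nhdsWithin (0:ℝ) (Ioi 0), 0 < slope g 0 x ∧ |x| < 1 := by
    have hsub : nhdsWithin (0:ℝ) (Ioi 0) ≤ nhdsWithin (0:ℝ) {0}ᶜ :=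
      nhdsWithin_mono _ (fun x hx => ne_of_gt hx)
    exact hsub (hev.and hev2)
  obtain ⟨x0, ⟨hx0slope, hx0abs⟩, hx0pos⟩ := (hmem'.and self_mem_nhdsWithin).exists
  have hx0lt : x0 < 1 := by rwa [abs_of_pos hx0pos] at hx0abs
  have hgx0 : 0 < g x0 := by
    have hsl : slope g 0 x0 = g x0 / x0 := by
      simp [slope, hg, Real.tanh_zero]; ring
    rw [hsl] at hx0slope
    rcases div_pos_iff.mp hx0slope with ⟨h, _⟩ | ⟨_, h⟩
    · exact h
    · linarith
  have hg1 : g 1 < 0 := by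
    have := tanh_lt_one' (a * 1)
    simp only [hg]
    linarith
  obtain ⟨mstar, hmem, hgm⟩ : ∃ m ∈ Ioo x0 1, g m = 0 := by
    have hIVT := intermediate_value_Ioo' (le_of_lt hx0lt) hgcont.continuousOn
    obtain ⟨m, hm, hgm⟩ := hIVT ⟨hg1, hgx0⟩
    exact ⟨m, hm, hgm⟩
  have hfix : Real.tanh (a * mstar) = mstar := by
    have : Real.tanh (a * mstar) - mstar = 0 := hgm
    linarith
  have hm01 : mstar ∈ Ioo (0:ℝ) 1 := ⟨hx0pos.trans hmem.1, hmem.2⟩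
  refine ⟨mstar, hm01, ?_⟩
  have huniq : ∀ m : ℝ, 0 < m → Real.tanh (a * m) = m → m = mstar := by
    intro m hm hmfix
    rcases lt_trichotomy m mstar with h | h | h
    · exact absurd (tanh_above a m mstar ha0 hm h hfix) (by rw [hmfix]; exact lt_irrefl m)
    · exact h
    · exact absurd (tanh_above a mstar m ha0 hm01.1 h hmfix)
        (by rw [hfix]; exact lt_irrefl mstar)
  ext m
  simp only [mem_setOf_eq, mem_insert_iff, mem_singleton_iff, mem_Ioo]
  constructor
  · rintro ⟨⟨_, _⟩, hmfix⟩
    rw [hkey] at hmfix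
    rcases lt_trichotomy m 0 with h | h | h
    · left
      have hneg : Real.tanh (a * (-m)) = -m := by
        rw [show a * (-m) = -(a * m) by ring, Real.tanh_neg, ← hmfix]
      have := huniq (-m) (by linarith) hneg
      linarith
    · right; left; exact h
    · right; right; exact huniq m h hmfix.symm
  · rintro (rfl | rfl | rfl)
    · refine ⟨⟨by linarith [hm01.2], by linarith [hm01.1]⟩, ?_⟩
      rw [hkey, show a * (-mstar) = -(a * mstar) by ring, Real.tanh_neg, hfix]
    · refine ⟨⟨by linarith, one_pos⟩, ?_⟩
      rw [hkey, mul_zero, Real.tanh_zero]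
    · exact ⟨⟨by linarith [hm01.1], hm01.2⟩, by rw [hkey, hfix]⟩
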